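/- For every permutation π ∈ S_n avoiding 132 with comp(π) = k ≥ 2, the last k-1 letters of π are n-k+2, n-k+3, ..., n in increasing order, i.e., π(n-k+1+j) = n-k+1+j for 1 ≤ j ≤ k-1. -/
import Mathlib


open Finset
open scoped Classical

/-- Number of components of a permutation of `Fin n` (0-based version of
`|{i ∈ [n] : π(j) ≤ i for all j ≤ i}|`). -/
def comps {n : ℕ} (π : Equiv.Perm (Fin n)) : ℕ :=
  (Finset.univ.filter fun i : Fin n => ∀ j, j ≤ i → π j ≤ i).card

/-- Number of descents. -/
def des {n : ℕ} (π : Equiv.Perm (Fin n)) : ℕ :=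
  (Finset.univ.filter fun i : Fin n =>
    ∃ h : (i : ℕ) + 1 < n, π ⟨(i : ℕ) + 1, h⟩ < π i).card

/-- Length of the initial ascending run: `min(DES(π) ∪ {n})` with 1-based descent positions. -/
noncomputable def iar {n : ℕ} (π : Equiv.Perm (Fin n)) : ℕ :=
  sInf {k : ℕ | k = n ∨ 0 < k ∧ ∃ h : k < n, π ⟨k, h⟩ < π ⟨k - 1, by omega⟩}

/-- `π` contains the pattern `σ`. -/
def ContainsPat {n m : ℕ} (π : Equiv.Perm (Fin n)) (σ : Equiv.Perm (Fin m)) : Prop :=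
  ∃ f : Fin m → Fin n, StrictMono f ∧ ∀ a b : Fin m, σ a < σ b ↔ π (f a) < π (f b)

/-- `π` avoids the pattern `σ`. -/
def AvoidsPat {n m : ℕ} (π : Equiv.Perm (Fin n)) (σ : Equiv.Perm (Fin m)) : Prop :=
  ¬ ContainsPat π σ

def pat123 : Equiv.Perm (Fin 3) := ⟨![0, 1, 2], ![0, 1, 2], by decide, by decide⟩
def pat132 : Equiv.Perm (Fin 3) := ⟨![0, 2, 1], ![0, 2, 1], by decide, by decide⟩
def pat213 : Equiv.Perm (Fin 3) := ⟨![1, 0, 2], ![1, 0, 2], by decide, by decide⟩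
def pat231 : Equiv.Perm (Fin 3) := ⟨![1, 2, 0], ![2, 0, 1], by decide, by decide⟩
def pat312 : Equiv.Perm (Fin 3) := ⟨![2, 0, 1], ![1, 2, 0], by decide, by decide⟩
def pat321 : Equiv.Perm (Fin 3) := ⟨![2, 1, 0], ![2, 1, 0], by decide, by decide⟩

/-- Direct sum of two permutations. -/
def directSum {m l : ℕ} (π : Equiv.Perm (Fin m)) (σ : Equiv.Perm (Fin l)) :
    Equiv.Perm (Fin (m + l)) :=
  finSumFinEquiv.permCongr (Equiv.sumCongr π σ)

/-- Direct sum of a finite family of permutations. -/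
def dsum : {k : ℕ} → (a : Fin k → ℕ) → ((i : Fin k) → Equiv.Perm (Fin (a i))) →
    Equiv.Perm (Fin (∑ i, a i))
  | 0, _, _ => Equiv.refl _
  | _ + 1, a, τ =>
      (finCongr (Fin.sum_univ_succ a).symm).permCongr
        (directSum (τ 0) (dsum (fun i => a i.succ) (fun i => τ i.succ)))

/-- Set of values of left-to-right maxima. -/
noncomputable def LMAX {n : ℕ} (π : Equiv.Perm (Fin n)) : Finset (Fin n) :=
  Finset.univ.filter fun v => ∃ i, π i = v ∧ ∀ j, j < i → π j < v

/-- Set of values of left-to-right minima. -/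
noncomputable def LMIN {n : ℕ} (π : Equiv.Perm (Fin n)) : Finset (Fin n) :=
  Finset.univ.filter fun v => ∃ i, π i = v ∧ ∀ j, j < i → v < π j

/-- Set of descent bottoms. -/
noncomputable def DESB {n : ℕ} (π : Equiv.Perm (Fin n)) : Finset (Fin n) :=
  Finset.univ.filter fun v => ∃ i : ℕ, ∃ h : i + 1 < n,
    π ⟨i + 1, h⟩ = v ∧ π ⟨i + 1, h⟩ < π ⟨i, by omega⟩

/-- for a 132-avoiding permutation with `comp(π) = k ≥ 2`, the last `k-1`
letters are `n-k+2, …, n` in increasing order, i.e. all positions `i` (0-based) with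
`i ≥ n-k+1` are fixed points. -/
theorem last_letters_132 (n k : ℕ) (π : Equiv.Perm (Fin n))
    (h : AvoidsPat π pat132) (hk : comps π = k) (h2 : 2 ≤ k) :
    ∀ i : Fin n, n - k + 1 ≤ (i : ℕ) → π i = i := by
  intro i hi
  have hn : 0 < n := i.pos
  set S := (Finset.univ.filter fun i : Fin n => ∀ j, j ≤ i → π j ≤ i) with hS
  have hne : S.Nonempty := by
    refine ⟨⟨n - 1, by omega⟩, ?_⟩
    simp only [hS, Finset.mem_filter, Finset.mem_univ, true_and]
    intro j _
    have := (π j).isLt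
    exact Fin.le_def.mpr (by show (π j : ℕ) ≤ n - 1; omega)
  set c0 := S.min' hne with hc0
  have hc0mem : c0 ∈ S := S.min'_mem hne
  have hclose : ∀ j, j ≤ c0 → π j ≤ c0 := by
    simpa [hS] using hc0mem
  -- anything strictly past c0 maps strictly past c0
  have himg : ∀ q : Fin n, c0 < q → c0 < π q := by
    intro q hq
    by_contra hle
    push_neg at hle
    have hsub : (Finset.Iic c0).image π ⊆ Finset.Iic c0 := by
      intro x hx
      simp only [Finset.mem_image, Finset.mem_Iic] at hx ⊢
      obtain ⟨j, hj, rfl⟩ := hx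
      exact hclose j hj
    have hcard : (Finset.Iic c0).card ≤ ((Finset.Iic c0).image π).card := by
      rw [Finset.card_image_of_injective _ π.injective]
    have heq := Finset.eq_of_subset_of_card_le hsub hcard
    have hmem : π q ∈ (Finset.Iic c0).image π := by
      rw [heq]; exact Finset.mem_Iic.mpr hle
    simp only [Finset.mem_image, Finset.mem_Iic] at hmem
    obtain ⟨j, hj, hjq⟩ := hmem
    have := π.injective hjq
    subst this
    exact absurd hq (not_lt.mpr hj)
  -- π is strictly increasing at positions past c0 (using 132-avoidance)
  have hmono : ∀ p q : Fin n, c0 < p → p < q → π p < π q := by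
    intro p q hp hpq
    by_contra hle
    push_neg at hle
    have hne' : π q ≠ π p := fun hq => absurd (π.injective hq) (ne_of_gt hpq)
    have hlt : π q < π p := lt_of_le_of_ne hle hne'
    obtain ⟨a, hπa⟩ : ∃ a, π a = ⟨0, hn⟩ := ⟨π.symm _, π.apply_symm_apply _⟩
    have hπa' : (π a : ℕ) = 0 := by rw [hπa]
    have haz : a ≤ c0 := by
      by_contra h'
      push_neg at h'
      have := Fin.lt_def.mp (himg a h')
      omega
    have hap : (a : ℕ) < (p : ℕ) := Fin.lt_def.mp (lt_of_le_of_lt haz hp)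
    have hq : c0 < q := hp.trans hpq
    have hπp : 0 < (π p : ℕ) := by
      have := Fin.lt_def.mp (himg p hp); omega
    have hπq : 0 < (π q : ℕ) := by
      have := Fin.lt_def.mp (himg q hq); omega
    have hlt' : (π q : ℕ) < (π p : ℕ) := Fin.lt_def.mp hlt
    have hpq' : (p : ℕ) < (q : ℕ) := Fin.lt_def.mp hpq
    apply h
    refine ⟨![a, p, q], ?_, ?_⟩
    · intro x y hxy
      have hxy' := Fin.lt_def.mp hxy
      fin_cases x <;> fin_cases y <;> simp only [] at hxy' <;>
        simp only [Fin.zero_eta, Fin.mk_one, show (⟨2, by omega⟩ : Fin 3) = 2 from rfl,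
          Matrix.cons_val_zero, Matrix.cons_val_one, Matrix.head_cons,
          Matrix.cons_val_two, Matrix.tail_cons] <;>
        rw [Fin.lt_def] <;> omega
    · intro x y
      fin_cases x <;> fin_cases y <;>
        simp only [Fin.zero_eta, Fin.mk_one, show (⟨2, by omega⟩ : Fin 3) = 2 from rfl,
          Matrix.cons_val_zero, Matrix.cons_val_one, Matrix.head_cons,
          Matrix.cons_val_two, Matrix.tail_cons, pat132, Equiv.coe_fn_mk,
          Fin.lt_def, Fin.val_zero, Fin.val_one, Fin.val_two] <;>
        omega
  -- every position past c0 is a fixed point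
  have hfix : ∀ m : ℕ, ∀ i : Fin n, (i : ℕ) = m → c0 < i → π i = i := by
    intro m
    induction m using Nat.strong_induction_on with
    | _ m IH =>
      intro i him hci
      have hπi := himg i hci
      rcases lt_trichotomy (π i) i with hlt | heq | hgt
      · exfalso
        have hv := IH ((π i : Fin n) : ℕ) (by have := Fin.lt_def.mp hlt; omega)
          (π i) rfl hπi
        have : π i = i := π.injective hv
        exact absurd hlt (by rw [this]; exact lt_irrefl _)
      · exact heq
      · exfalso
        set q := π.symm i with hqdef
        have hπq : π q = i := π.apply_symm_apply i
        have hcq : c0 < q := by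
          by_contra h'
          push_neg at h'
          have := hclose q h'
          rw [hπq] at this
          exact absurd hci (not_lt.mpr this)
        have hqi : q ≠ i := by
          intro h'
          rw [h'] at hπq
          exact absurd hπq (ne_of_gt hgt)
        rcases lt_or_gt_of_ne hqi with h' | h'
        · have := IH (q : ℕ) (by have := Fin.lt_def.mp h'; omega) q rfl hcq
          rw [this] at hπq
          exact hqi hπq
        · have := hmono i q hci h'
          rw [hπq] at this
          exact absurd (hgt.trans this) (lt_irrefl _)
  -- the set of component closers is exactly {i : c0 ≤ i}
  have hSeq : S = Finset.Ici c0 := by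
    ext c
    simp only [hS, Finset.mem_filter, Finset.mem_univ, true_and, Finset.mem_Ici]
    constructor
    · intro hc
      exact S.min'_le c (by simp [hS]; exact hc)
    · intro hc j hj
      rcases le_or_gt j c0 with h1 | h1
      · exact (hclose j h1).trans hc
      · rw [hfix (j : ℕ) j rfl h1]; exact hj
  have hkval : k = n - (c0 : ℕ) := by
    rw [← hk]
    show S.card = _
    rw [hSeq, Fin.card_Ici]
  have hc0i : (c0 : ℕ) < (i : ℕ) := by
    have := c0.isLt
    omega
  exact hfix (i : ℕ) i rfl (Fin.lt_def.mpr hc0i)
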